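/- There exists θ₀ ∈ (π/2, π) such that for every θ ∈ (π/2, θ₀) there is a constant c > 0, independent of τ and z, with the property: for every time step τ > 0 and every z ∈ D(τ,θ) one has |δ_τ(e^{−zτ}) − z| ≤ c τ³ |z|⁴, where δ_τ is the BDF3 generating symbol. -/

import Mathlib

open Complex Set

/-- The BDF3 generating symbol `δ_τ(ξ) = τ⁻¹(11/6 − 3ξ + (3/2)ξ² − (1/3)ξ³)`. -/
noncomputable def bdf3 (τ : ℝ) (ξ : ℂ) : ℂ :=
  (τ : ℂ)⁻¹ * (11 / 6 - 3 * ξ + (3 / 2) * ξ ^ 2 - (1 / 3) * ξ ^ 3)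

/-- The region `D(τ,θ)`: nonzero `z` with either `|arg z| = θ` and `|Im z| ≤ π/τ`,
or `|z| ≤ 1/τ` and `|arg z| ≤ θ`. -/
def Dset (τ θ : ℝ) : Set ℂ :=
  {z : ℂ | z ≠ 0 ∧
    ((|z.arg| = θ ∧ |z.im| ≤ Real.pi / τ) ∨ (‖z‖ ≤ 1 / τ ∧ |z.arg| ≤ θ))}

open scoped Nat

/-- Degree-3 Taylor polynomial of `exp`. -/
noncomputable def P3 (x : ℂ) : ℂ := 1 + x + x ^ 2 / 2 + x ^ 3 / 6

/-- Fourth-order Taylor remainder bound for the complex exponential. -/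
lemma exp_tail_bound (x : ℂ) :
    ‖Complex.exp x - P3 x‖ ≤
      ‖x‖ ^ 4 / 24 * Real.exp (‖x‖) := by
  have hsum : Summable (fun n : ℕ => x ^ n / n !) :=
    NormedSpace.expSeries_div_summable x
  have hexp : Complex.exp x = ∑' n : ℕ, x ^ n / n ! := by
    rw [Complex.exp_eq_exp_ℂ, NormedSpace.exp_eq_tsum_div]
  have htail : Complex.exp x - P3 x =
      ∑' k : ℕ, x ^ (k + 4) / ((k + 4)! : ℂ) := by
    have h := Summable.sum_add_tsum_nat_add (f := fun n : ℕ => x ^ n / (n ! : ℂ)) 4 hsum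
    rw [hexp, ← h, P3]
    simp [Finset.sum_range_succ, Nat.factorial]
  have habs : ∀ k : ℕ, ‖x ^ (k + 4) / ((k + 4)! : ℂ)‖ =
      ‖x‖ ^ (k + 4) / ((k + 4)! : ℝ) := by
    intro k
    rw [norm_div, norm_pow, Complex.norm_natCast]
  have hfact : ∀ k : ℕ, (24 : ℝ) * k ! ≤ (k + 4)! := by
    intro k
    have hdvd : (4)! * k ! ∣ (4 + k)! := Nat.factorial_mul_factorial_dvd_factorial_add 4 k
    have h2 : (4)! * k ! ≤ (4 + k)! := Nat.le_of_dvd (Nat.factorial_pos _) hdvd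
    have h3 := Nat.cast_le (α := ℝ) |>.mpr h2
    push_cast at h3
    calc (24:ℝ) * k ! = 4 ! * k ! := by norm_num [Nat.factorial]
      _ ≤ ((4 + k)! : ℝ) := h3
      _ = ((k + 4)! : ℝ) := by rw [Nat.add_comm]
  have hbound : ∀ k : ℕ, ‖x‖ ^ (k + 4) / ((k + 4)! : ℝ) ≤
      ‖x‖ ^ 4 / 24 * (‖x‖ ^ k / k !) := by
    intro k
    have h1 : (0:ℝ) < 24 * k ! := by positivity
    have h2 : ‖x‖ ^ (k + 4) / ((k + 4)! : ℝ) ≤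
        ‖x‖ ^ (k + 4) / (24 * k !) :=
      div_le_div_of_nonneg_left (by positivity) h1 (hfact k)
    refine h2.trans (le_of_eq ?_)
    rw [pow_add]
    ring
  have hgsum : Summable (fun k : ℕ => ‖x‖ ^ 4 / 24 * (‖x‖ ^ k / k !)) :=
    (Real.summable_pow_div_factorial _).mul_left _
  have hfsum : Summable (fun k : ℕ => ‖x‖ ^ (k + 4) / ((k + 4)! : ℝ)) :=
    (summable_nat_add_iff 4).2 (Real.summable_pow_div_factorial _)
  have hexpR : Real.exp (‖x‖) = ∑' n : ℕ, ‖x‖ ^ n / n ! := by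
    rw [Real.exp_eq_exp_ℝ, NormedSpace.exp_eq_tsum_div]
  calc ‖Complex.exp x - P3 x‖
      = ‖∑' k : ℕ, x ^ (k + 4) / ((k + 4)! : ℂ)‖ := by rw [htail]
    _ ≤ ∑' k : ℕ, ‖x ^ (k + 4) / ((k + 4)! : ℂ)‖ := by
        refine norm_tsum_le_tsum_norm ?_
        simpa only [habs] using hfsum
    _ = ∑' k : ℕ, ‖x‖ ^ (k + 4) / ((k + 4)! : ℝ) := by
        simp only [habs]
    _ ≤ ∑' k : ℕ, ‖x‖ ^ 4 / 24 * (‖x‖ ^ k / k !) :=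
        Summable.tsum_le_tsum hbound hfsum hgsum
    _ = ‖x‖ ^ 4 / 24 * Real.exp (‖x‖) := by
        rw [tsum_mul_left, hexpR]

lemma abs_add_sub_le (a b c : ℂ) :
    ‖a + b - c‖ ≤ ‖a‖ + ‖b‖ + ‖c‖ := by
  calc ‖a + b - c‖ ≤ ‖a + b‖ + ‖c‖ := norm_sub_le _ _
    _ ≤ ‖a‖ + ‖b‖ + ‖c‖ := by linarith [norm_add_le a b]

theorem bdf3_symbol_consistency :
    ∃ θ₀ ∈ Ioo (Real.pi / 2) Real.pi, ∀ θ ∈ Ioo (Real.pi / 2) θ₀,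
      ∃ c > (0 : ℝ),
        ∀ τ : ℝ, 0 < τ → ∀ z ∈ Dset τ θ,
          ‖bdf3 τ (Complex.exp (-z * τ)) - z‖ ≤
            c * τ ^ 3 * ‖z‖ ^ 4 := by
  have hπ := Real.pi_pos
  refine ⟨3 * Real.pi / 4, ⟨by linarith, by linarith⟩, ?_⟩
  rintro θ ⟨hθ1, hθ2⟩
  refine ⟨3 * Real.exp 15, by positivity, ?_⟩
  intro τ hτ z hz
  obtain ⟨hz0, hcase⟩ := hz
  have habsz : (0:ℝ) < ‖z‖ := by
    simpa using hz0
  set A : ℝ := ‖z‖ * τ with hA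
  have hA0 : (0:ℝ) ≤ A := by positivity
  -- lower bound on sin θ
  have hs2 : (0.7:ℝ) < Real.sqrt 2 / 2 := by
    nlinarith [Real.sq_sqrt (by norm_num : (0:ℝ) ≤ 2), Real.sqrt_nonneg 2]
  have hsin : Real.sqrt 2 / 2 < Real.sin θ := by
    have h1 : Real.sin θ = Real.sin (Real.pi - θ) := (Real.sin_pi_sub θ).symm
    rw [h1, ← Real.sin_pi_div_four]
    exact Real.sin_lt_sin_of_lt_of_le_pi_div_two (by linarith) (by linarith) (by linarith)
  have hsinpos : (0:ℝ) < Real.sin θ := by linarith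
  -- the crucial bound |zτ| ≤ 5
  have hA5 : A ≤ 5 := by
    rcases hcase with ⟨harg, him⟩ | ⟨habs, -⟩
    · have hθ0 : (0:ℝ) ≤ θ := by linarith
      have him_eq : z.im = ‖z‖ * Real.sin z.arg := by
        rw [Complex.sin_arg]; field_simp
      have hsinabs : |Real.sin z.arg| = Real.sin θ := by
        rcases (abs_eq hθ0).mp harg with h | h
        · rw [h, abs_of_pos hsinpos]
        · rw [h, Real.sin_neg, abs_neg, abs_of_pos hsinpos]
      have him2 : ‖z‖ * Real.sin θ ≤ Real.pi / τ := by
        calc ‖z‖ * Real.sin θ = |z.im| := by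
              rw [him_eq, abs_mul, abs_of_pos habsz, hsinabs]
          _ ≤ Real.pi / τ := him
      have him3 : A * Real.sin θ ≤ Real.pi := by
        have := mul_le_mul_of_nonneg_right him2 hτ.le
        rw [div_mul_cancel₀ _ hτ.ne'] at this
        calc A * Real.sin θ = ‖z‖ * Real.sin θ * τ := by ring
          _ ≤ Real.pi := this
      nlinarith [Real.pi_lt_d2]
    · have : A ≤ 1 := by
        calc A = ‖z‖ * τ := hA
          _ ≤ (1 / τ) * τ := mul_le_mul_of_nonneg_right habs hτ.le
          _ = 1 := by field_simp
      linarith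
  -- the algebraic identity
  have ht : (τ : ℂ) ≠ 0 := Complex.ofReal_ne_zero.2 hτ.ne'
  have key : bdf3 τ (Complex.exp (-z * τ)) - z =
      (τ : ℂ)⁻¹ *
        (-3 * (Complex.exp (-(z * τ)) - P3 (-(z * τ)))
          + 3 / 2 * (Complex.exp (-(2 * (z * τ))) - P3 (-(2 * (z * τ))))
          - 1 / 3 * (Complex.exp (-(3 * (z * τ))) - P3 (-(3 * (z * τ))))) := by
    have h2 : Complex.exp (-(2 * (z * (τ:ℂ)))) = Complex.exp (-(z * τ)) ^ 2 := by
      rw [sq, ← Complex.exp_add]; ring_nf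
    have h3 : Complex.exp (-(3 * (z * (τ:ℂ)))) = Complex.exp (-(z * τ)) ^ 3 := by
      rw [pow_succ, sq, ← Complex.exp_add, ← Complex.exp_add]; ring_nf
    rw [bdf3, show -z * (τ:ℂ) = -(z * τ) from by ring, h2, h3, P3, P3, P3]
    field_simp
    ring
  -- norms of the arguments
  have ha1 : ‖-(z * (τ:ℂ))‖ = A := by
    rw [norm_neg, norm_mul, Complex.norm_real, Real.norm_eq_abs, abs_of_pos hτ]
  have ha2 : ‖-(2 * (z * (τ:ℂ)))‖ = 2 * A := by
    rw [norm_neg, norm_mul, norm_mul, Complex.norm_real, Real.norm_eq_abs, abs_of_pos hτ]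
    norm_num [mul_assoc, hA]
  have ha3 : ‖-(3 * (z * (τ:ℂ)))‖ = 3 * A := by
    rw [norm_neg, norm_mul, norm_mul, Complex.norm_real, Real.norm_eq_abs, abs_of_pos hτ]
    norm_num [mul_assoc, hA]
  -- Taylor remainder bounds with explicit constants
  have hX : (0:ℝ) ≤ A ^ 4 * Real.exp 15 := by positivity
  have hE1 : ‖Complex.exp (-(z * (τ:ℂ))) - P3 (-(z * (τ:ℂ)))‖ ≤
      1 / 24 * (A ^ 4 * Real.exp 15) := by
    refine (exp_tail_bound _).trans ?_
    rw [ha1]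
    have h := mul_le_mul_of_nonneg_left (Real.exp_le_exp.2 (by linarith : A ≤ 15))
      (by positivity : (0:ℝ) ≤ A ^ 4 / 24)
    exact h.trans (le_of_eq (by ring))
  have hE2 : ‖Complex.exp (-(2 * (z * (τ:ℂ)))) - P3 (-(2 * (z * (τ:ℂ))))‖ ≤
      2 / 3 * (A ^ 4 * Real.exp 15) := by
    refine (exp_tail_bound _).trans ?_
    rw [ha2]
    have h := mul_le_mul_of_nonneg_left (Real.exp_le_exp.2 (by linarith : 2 * A ≤ 15))
      (by positivity : (0:ℝ) ≤ (2 * A) ^ 4 / 24)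
    exact h.trans (le_of_eq (by ring))
  have hE3 : ‖Complex.exp (-(3 * (z * (τ:ℂ)))) - P3 (-(3 * (z * (τ:ℂ))))‖ ≤
      27 / 8 * (A ^ 4 * Real.exp 15) := by
    refine (exp_tail_bound _).trans ?_
    rw [ha3]
    have h := mul_le_mul_of_nonneg_left (Real.exp_le_exp.2 (by linarith : 3 * A ≤ 15))
      (by positivity : (0:ℝ) ≤ (3 * A) ^ 4 / 24)
    exact h.trans (le_of_eq (by ring))
  -- combine
  have hsumb : ‖-3 * (Complex.exp (-(z * (τ:ℂ))) - P3 (-(z * (τ:ℂ))))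
        + 3 / 2 * (Complex.exp (-(2 * (z * (τ:ℂ)))) - P3 (-(2 * (z * (τ:ℂ)))))
        - 1 / 3 * (Complex.exp (-(3 * (z * (τ:ℂ)))) - P3 (-(3 * (z * (τ:ℂ)))))‖ ≤
      3 * Real.exp 15 * A ^ 4 := by
    refine (abs_add_sub_le _ _ _).trans ?_
    rw [norm_mul, norm_mul, norm_mul]
    have c1 : ‖(-3 : ℂ)‖ = 3 := by norm_num
    have c2 : ‖(3 / 2 : ℂ)‖ = 3 / 2 := by norm_num [norm_div]
    have c3 : ‖(1 / 3 : ℂ)‖ = 1 / 3 := by norm_num [norm_div]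
    rw [c1, c2, c3, show (3:ℝ) * Real.exp 15 * A ^ 4 = 3 * (A ^ 4 * Real.exp 15) from by ring]
    linarith [hE1, hE2, hE3, hX]
  have habs_inv : ‖(τ:ℂ)⁻¹‖ = τ⁻¹ := by
    rw [norm_inv, Complex.norm_real, Real.norm_eq_abs, abs_of_pos hτ]
  calc ‖bdf3 τ (Complex.exp (-z * τ)) - z‖
      = τ⁻¹ * ‖-3 * (Complex.exp (-(z * (τ:ℂ))) - P3 (-(z * (τ:ℂ))))
          + 3 / 2 * (Complex.exp (-(2 * (z * (τ:ℂ)))) - P3 (-(2 * (z * (τ:ℂ)))))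
          - 1 / 3 * (Complex.exp (-(3 * (z * (τ:ℂ)))) - P3 (-(3 * (z * (τ:ℂ)))))‖ := by
        rw [key, norm_mul, habs_inv]
    _ ≤ τ⁻¹ * (3 * Real.exp 15 * A ^ 4) := by
        exact mul_le_mul_of_nonneg_left hsumb (by positivity)
    _ = 3 * Real.exp 15 * τ ^ 3 * ‖z‖ ^ 4 := by
        rw [hA]
        field_simp
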